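/- For the binary extension construction: if C ⊆ F₂ⁿ is self-dual with generating vectors r₁,…,r_k and X ∈ F₂ⁿ has odd weight (⟨X,X⟩ = 1), then the span of (1,0,X) and (yᵢ, yᵢ, rᵢ) with yᵢ = ⟨rᵢ,X⟩ is a self-dual code of length n+2 of dimension (n+2)/2. -/

import Mathlib

/-- The dual (with respect to the standard inner product) of a set of
vectors in `F₂ⁿ`. -/
def dualSet {n : ℕ} (C : Set (Fin n → ZMod 2)) : Set (Fin n → ZMod 2) :=
  {y | ∀ x ∈ C, ∑ i, x i * y i = 0}

/-- The binary code of length `n+2` of the building-up construction: the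
span of the row `(1, 0, X)` together with the rows `(yᵢ, yᵢ, rᵢ)` where
`yᵢ = ⟨rᵢ, X⟩`. -/
def buildUpCode {n k : ℕ} (r : Fin k → Fin n → ZMod 2)
    (X : Fin n → ZMod 2) : Submodule (ZMod 2) (Fin (n + 2) → ZMod 2) :=
  Submodule.span (ZMod 2)
    (insert (Fin.cons 1 (Fin.cons 0 X))
      (Set.range fun i =>
        Fin.cons (∑ t, r i t * X t)
          (Fin.cons (∑ t, r i t * X t) (r i))))

section Aux

/-- The standard dot-product bilinear form on `F₂ᵐ`. -/
noncomputable def dotB (m : ℕ) : LinearMap.BilinForm (ZMod 2) (Fin m → ZMod 2) :=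
  LinearMap.mk₂ (ZMod 2) (fun x y => ∑ i, x i * y i)
    (fun x x' y => by simp [add_mul, Finset.sum_add_distrib])
    (fun c x y => by simp [Finset.mul_sum, mul_assoc])
    (fun x y y' => by simp [mul_add, Finset.sum_add_distrib])
    (fun c x y => by simp [Finset.mul_sum]; ring_nf; simp [mul_comm, mul_left_comm])

@[simp] lemma dotB_apply {m : ℕ} (x y : Fin m → ZMod 2) :
    dotB m x y = ∑ i, x i * y i := rfl

lemma dotB_symm {m : ℕ} : (dotB m).IsSymm := by
  constructor
  intro x y; simp [mul_comm]

lemma dotB_nondeg {m : ℕ} : (dotB m).Nondegenerate := by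
  refine LinearMap.BilinForm.Nondegenerate.ofSeparatingLeft ?_
  intro x hx
  funext i
  have := hx (Pi.single i 1)
  simpa [Pi.single_apply, Finset.sum_ite_eq] using this

lemma dualSet_eq_orthogonal {m : ℕ} (W : Submodule (ZMod 2) (Fin m → ZMod 2)) :
    dualSet (W : Set (Fin m → ZMod 2)) = ((dotB m).orthogonal W : Set (Fin m → ZMod 2)) := by
  ext y
  simp [dualSet, LinearMap.BilinForm.mem_orthogonal_iff, LinearMap.BilinForm.IsOrtho]

lemma span_le_orthogonal_span {m : ℕ} (S : Set (Fin m → ZMod 2))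
    (h : ∀ s ∈ S, ∀ t ∈ S, dotB m s t = 0) :
    Submodule.span (ZMod 2) S ≤ (dotB m).orthogonal (Submodule.span (ZMod 2) S) := by
  rw [Submodule.span_le]
  intro s hs x hx
  have hker : Submodule.span (ZMod 2) S ≤ LinearMap.ker (dotB m s) := by
    rw [Submodule.span_le]
    intro t ht
    simpa using h s hs t ht
  have := hker hx
  simpa [LinearMap.BilinForm.IsOrtho, dotB_symm.eq s x] using this

lemma dot_cons {m : ℕ} (a b : ZMod 2) (f g : Fin m → ZMod 2) :
    ∑ i : Fin (m + 1), Fin.cons a f i * Fin.cons b g i = a * b + ∑ i, f i * g i := by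
  rw [Fin.sum_univ_succ]; simp

lemma dot_self_eq_one {m : ℕ} (X : Fin m → ZMod 2) (hX : Odd (hammingNorm X)) :
    ∑ i, X i * X i = 1 := by
  have hsq : ∀ a : ZMod 2, a * a = a := by decide
  have h1 : ∀ a : ZMod 2, a ≠ 0 → a = 1 := by decide
  simp only [hsq]
  have : ∑ i, X i = ∑ i ∈ Finset.univ.filter (fun i => X i ≠ 0), X i := by
    rw [Finset.sum_filter_of_ne]; intro i _ h; exact fun h0 => h (by simp [h0])
  rw [this, Finset.sum_congr rfl (fun i hi => h1 _ (by simpa using (Finset.mem_filter.mp hi).2))]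
  simp only [Finset.sum_const, smul_eq_mul, mul_one]
  obtain ⟨c, hc⟩ := hX
  rw [hammingNorm] at hc
  rw [show (Finset.univ.filter (fun i => X i ≠ 0)).card = 2 * c + 1 from hc]
  simp
  exact Or.inl (by decide)

end Aux
open Module in

theorem binary_buildUp_selfDual {n k : ℕ} (r : Fin k → Fin n → ZMod 2)
    (C : Submodule (ZMod 2) (Fin n → ZMod 2))
    (hgen : C = Submodule.span (ZMod 2) (Set.range r))
    (hsd : (C : Set (Fin n → ZMod 2)) = dualSet (C : Set (Fin n → ZMod 2)))
    (X : Fin n → ZMod 2) (hX : Odd (hammingNorm X)) :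
    (buildUpCode r X : Set (Fin (n + 2) → ZMod 2)) =
      dualSet (buildUpCode r X : Set (Fin (n + 2) → ZMod 2)) ∧
    Module.finrank (ZMod 2) (buildUpCode r X) = (n + 2) / 2 := by
  classical
  set v0 : Fin (n + 2) → ZMod 2 := Fin.cons 1 (Fin.cons 0 X) with hv0
  set v : Fin k → Fin (n + 2) → ZMod 2 := fun i =>
    Fin.cons (∑ t, r i t * X t) (Fin.cons (∑ t, r i t * X t) (r i)) with hv
  set S : Set (Fin (n + 2) → ZMod 2) := insert v0 (Set.range v) with hS
  have hD : buildUpCode r X = Submodule.span (ZMod 2) S := rfl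
  -- facts about C
  have horthC : (dotB n).orthogonal C = C := by
    apply SetLike.coe_injective
    rw [← dualSet_eq_orthogonal, ← hsd]
  have hrC : ∀ i, r i ∈ C := fun i => hgen ▸ Submodule.subset_span ⟨i, rfl⟩
  have hCC : ∀ x ∈ C, ∀ y ∈ C, ∑ t, x t * y t = 0 := by
    intro x hx y hy
    have : y ∈ dualSet (C : Set (Fin n → ZMod 2)) := hsd ▸ hy
    exact this x hx
  have haa : ∀ a : ZMod 2, a + a = 0 := by decide
  have hXX : ∑ t, X t * X t = 1 := dot_self_eq_one X hX
  -- pairwise orthogonality of generators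
  have hpair : ∀ s ∈ S, ∀ t ∈ S, dotB (n + 2) s t = 0 := by
    intro s hs t ht
    simp only [hS, Set.mem_insert_iff, Set.mem_range] at hs ht
    have hcomm : ∀ i, ∑ t, X t * r i t = ∑ t, r i t * X t := by
      intro i; exact Finset.sum_congr rfl fun t _ => mul_comm _ _
    rcases hs with rfl | ⟨i, rfl⟩ <;> rcases ht with rfl | ⟨j, rfl⟩ <;>
      simp only [dotB_apply, hv0, hv, dot_cons]
    · rw [hXX]; decide
    · rw [hcomm j]; simp [haa]
    · simp [haa]
    · rw [hCC _ (hrC i) _ (hrC j)]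
      simp [haa, mul_comm]
  have hle : buildUpCode r X ≤ (dotB (n + 2)).orthogonal (buildUpCode r X) := by
    rw [hD]; exact span_le_orthogonal_span S hpair
  -- dimension of C
  have hVn : Module.finrank (ZMod 2) (Fin n → ZMod 2) = n :=
    Module.finrank_fin_fun (ZMod 2)
  have hV2 : Module.finrank (ZMod 2) (Fin (n + 2) → ZMod 2) = n + 2 :=
    Module.finrank_fin_fun (ZMod 2)
  have hCn : Module.finrank (ZMod 2) C + Module.finrank (ZMod 2) C = n := by
    have h1 := LinearMap.BilinForm.finrank_orthogonal (B := dotB n) dotB_nondeg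
      C
    rw [horthC, hVn] at h1
    have h2 := Submodule.finrank_le C
    rw [hVn] at h2
    omega
  -- X ∉ C
  have hXnotC : X ∉ C := by
    intro h
    have := hCC X h X h
    rw [hXX] at this
    exact one_ne_zero this
  have hX0 : X ≠ 0 := fun h => hXnotC (h ▸ C.zero_mem)
  -- the projection dropping the first two coordinates
  set L : (Fin (n + 2) → ZMod 2) →ₗ[ZMod 2] (Fin n → ZMod 2) :=
    LinearMap.funLeft (ZMod 2) (ZMod 2) (fun j => j.succ.succ) with hL
  have hmap : Submodule.map L (buildUpCode r X) =
      Submodule.span (ZMod 2) {X} ⊔ C := by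
    rw [hD, Submodule.map_span, hS, Set.image_insert_eq, ← Set.range_comp]
    have h0 : L v0 = X := by
      funext j; simp [hL, hv0, LinearMap.funLeft_apply]
    have h1 : (L ∘ v) = r := by
      funext i j; simp [hL, hv, LinearMap.funLeft_apply]
    rw [h0, h1, Submodule.span_insert, hgen]
  have hinf : Submodule.span (ZMod 2) {X} ⊓ C = ⊥ := by
    rw [eq_bot_iff]
    intro x hx
    rw [Submodule.mem_inf] at hx
    obtain ⟨hxs, hxC⟩ := hx
    rw [Submodule.mem_span_singleton] at hxs
    obtain ⟨a, rfl⟩ := hxs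
    rcases (by decide : ∀ a : ZMod 2, a = 0 ∨ a = 1) a with rfl | rfl
    · simp
    · exact absurd (by simpa using hxC) hXnotC
  have hdimsup : Module.finrank (ZMod 2) ↥(Submodule.span (ZMod 2) {X} ⊔ C) =
      Module.finrank (ZMod 2) C + 1 := by
    have := Submodule.finrank_sup_add_finrank_inf_eq (Submodule.span (ZMod 2) {X}) C
    rw [hinf, finrank_bot, finrank_span_singleton hX0] at this
    omega
  have hlow : Module.finrank (ZMod 2) C + 1 ≤
      Module.finrank (ZMod 2) (buildUpCode r X) := by
    rw [← hdimsup, ← hmap]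
    exact Submodule.finrank_map_le L (buildUpCode r X)
  have horthdim : Module.finrank (ZMod 2)
        ((dotB (n + 2)).orthogonal (buildUpCode r X)) =
      (n + 2) - Module.finrank (ZMod 2) (buildUpCode r X) := by
    rw [LinearMap.BilinForm.finrank_orthogonal dotB_nondeg, hV2]
  have hup : Module.finrank (ZMod 2) (buildUpCode r X) +
      Module.finrank (ZMod 2) (buildUpCode r X) ≤ n + 2 := by
    have h1 := Submodule.finrank_mono hle
    rw [horthdim] at h1
    have h2 := Submodule.finrank_le (buildUpCode r X)
    rw [hV2] at h2
    omega
  have hdim : Module.finrank (ZMod 2) (buildUpCode r X) = (n + 2) / 2 := by omega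
  refine ⟨?_, hdim⟩
  have heq : buildUpCode r X = (dotB (n + 2)).orthogonal (buildUpCode r X) := by
    apply Submodule.eq_of_le_of_finrank_le hle
    rw [horthdim]
    omega
  rw [dualSet_eq_orthogonal, ← heq]
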